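/- Let S be a signed graph with n×n adjacency matrix A₀ whose eigenvalues, listed with multiplicity, are θ₁,…,θ_n, let p, q ≥ 1, and let B = [[0_p, −J_{p×q}],[−J_{q×p}, 0_q]] be the adjacency matrix of (K_{p,q},−). Let A be the adjacency matrix of S ⋆ₛ (K_{p,q},−). Then for every real t such that tI_{p+q} − B is invertible, det(tI_{n(p+q+1)} − A) = t^{n(p+q−2)} · ∏_{i=1}^{n} ((t² − pq)(t − θᵢ) − ((p+q)t − 2pq)θᵢ²). -/

import Mathlib

open Matrix BigOperators Kronecker

/-- A signed graph on vertex set `V` is represented by its adjacency matrix: a real symmetric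
matrix with zero diagonal and all entries in `{-1, 0, 1}`. -/
def IsSignedAdj {V : Type*} (A : Matrix V V ℝ) : Prop :=
  A.IsHermitian ∧ (∀ i, A i i = 0) ∧ ∀ i j, A i j = -1 ∨ A i j = 0 ∨ A i j = 1

/-- The adjacency matrix of the s-neighbourhood corona `S₁ ⋆ₛ S₂`:
the block matrix `[[A₁, jᵀ ⊗ A₁], [(jᵀ ⊗ A₁)ᵀ, A₂ ⊗ I]]`, indexed by `Fin n₁ ⊕ (V × Fin n₁)`. -/
def coronaAdj {n₁ : ℕ} {V : Type*} [DecidableEq V]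
    (A₁ : Matrix (Fin n₁) (Fin n₁) ℝ) (A₂ : Matrix V V ℝ) :
    Matrix (Fin n₁ ⊕ V × Fin n₁) (Fin n₁ ⊕ V × Fin n₁) ℝ :=
  Matrix.fromBlocks A₁ (Matrix.of fun i p => A₁ i p.2) (Matrix.of fun p j => A₁ p.2 j)
    (A₂ ⊗ₖ (1 : Matrix (Fin n₁) (Fin n₁) ℝ))

/-- The adjacency matrix of `(K_{p,q}, −)`, the all-negative complete bipartite signed graph:
the block matrix `[[0, −J], [−J, 0]]`. -/
def negKpq (p q : ℕ) : Matrix (Fin p ⊕ Fin q) (Fin p ⊕ Fin q) ℝ :=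
  Matrix.fromBlocks 0 (Matrix.of fun _ _ => -1) (Matrix.of fun _ _ => -1) 0

lemma negKpq_factor (p q : ℕ) :
    negKpq p q = (Matrix.of fun i (j : Fin 2) =>
        if j = 0 then Sum.elim (fun _ => (1:ℝ)) (fun _ => 0) i
        else Sum.elim (fun _ => (0:ℝ)) (fun _ => -1) i) *
      (Matrix.of fun (j : Fin 2) i =>
        if j = 0 then Sum.elim (fun _ => (0:ℝ)) (fun _ => -1) i
        else Sum.elim (fun _ => (1:ℝ)) (fun _ => 0) i) := by
  ext i k
  rw [Matrix.mul_apply, Fin.sum_univ_two]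
  cases i <;> cases k <;> simp [negKpq]

lemma det_smul_one_sub_negKpq {p q : ℕ} (hp : 1 ≤ p) (hq : 1 ≤ q) (t : ℝ) (ht : t ≠ 0) :
    (t • (1 : Matrix (Fin p ⊕ Fin q) (Fin p ⊕ Fin q) ℝ) - negKpq p q).det
      = t ^ (p + q - 2) * (t ^ 2 - p * q) := by
  set U := (Matrix.of fun i (j : Fin 2) =>
        if j = 0 then Sum.elim (fun _ => (1:ℝ)) (fun _ => 0) i
        else Sum.elim (fun _ => (0:ℝ)) (fun _ => -1) i)
  set V := (Matrix.of fun (j : Fin 2) i =>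
        if j = 0 then Sum.elim (fun _ => (0:ℝ)) (fun _ => -1) i
        else Sum.elim (fun _ => (1:ℝ)) (fun _ => 0) i)
  have h1 : t • (1 : Matrix (Fin p ⊕ Fin q) (Fin p ⊕ Fin q) ℝ) - negKpq p q
      = t • ((1 : Matrix (Fin p ⊕ Fin q) (Fin p ⊕ Fin q) ℝ) - (t⁻¹ • U) * V) := by
    rw [negKpq_factor, smul_sub, Matrix.smul_mul, smul_smul, mul_inv_cancel₀ ht, one_smul]
  have hVU : V * (t⁻¹ • U) = t⁻¹ • (V * U) := Matrix.mul_smul _ _ _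
  have hVU2 : V * U = Matrix.of ![![0, (q:ℝ)], ![(p:ℝ), 0]] := by
    ext j k
    rw [Matrix.mul_apply, Fintype.sum_sum_type]
    fin_cases j <;> fin_cases k <;>
      simp [U, V, Finset.sum_const, Fin.isValue]
  rw [h1, Matrix.det_smul, Matrix.det_one_sub_mul_comm, hVU, hVU2]
  rw [Matrix.det_fin_two]
  have hcard : Fintype.card (Fin p ⊕ Fin q) = p + q := by simp
  rw [hcard]
  have h2 : 2 ≤ p + q := by omega
  have : t ^ (p + q) = t ^ (p + q - 2) * t ^ 2 := by
    rw [← pow_add]; congr 1; omega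
  simp only [Matrix.sub_apply, Matrix.smul_apply, Matrix.one_apply, Matrix.of_apply]
  rw [this]
  norm_num [Matrix.cons_val_zero, Matrix.cons_val_one]
  field_simp

lemma det_smul_one_sub_negKpq' {p q : ℕ} (hp : 1 ≤ p) (hq : 1 ≤ q) (t : ℝ) :
    (t • (1 : Matrix (Fin p ⊕ Fin q) (Fin p ⊕ Fin q) ℝ) - negKpq p q).det
      = t ^ (p + q - 2) * (t ^ 2 - p * q) := by
  have hf : Continuous (fun s : ℝ =>
      (s • (1 : Matrix (Fin p ⊕ Fin q) (Fin p ⊕ Fin q) ℝ) - negKpq p q).det) := by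
    apply Continuous.matrix_det
    fun_prop
  have hg : Continuous (fun s : ℝ => s ^ (p + q - 2) * (s ^ 2 - (p:ℝ) * q)) := by fun_prop
  have := Continuous.ext_on (dense_compl_singleton (0:ℝ)) hf hg
    (fun s hs => det_smul_one_sub_negKpq hp hq s hs)
  exact congrFun this t

lemma key_CC {n : ℕ} {V : Type*} [Fintype V] [DecidableEq V]
    (A₀ : Matrix (Fin n) (Fin n) ℝ) (N : Matrix V V ℝ) :
    (Matrix.of fun i (pr : V × Fin n) => A₀ i pr.2) *
        (N ⊗ₖ (1 : Matrix (Fin n) (Fin n) ℝ)) *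
        (Matrix.of fun (pr : V × Fin n) j => A₀ pr.2 j)
      = (∑ v, ∑ w, N w v) • (A₀ * A₀) := by
  ext i j
  simp only [Matrix.mul_apply, Matrix.smul_apply, Matrix.of_apply,
    Matrix.kroneckerMap_apply, Matrix.one_apply, Fintype.sum_prod_type,
    mul_ite, mul_one, mul_zero, Finset.sum_ite_eq', Finset.mem_univ, if_true,
    Finset.sum_mul, Finset.mul_sum, smul_eq_mul]
  rw [Finset.sum_comm]
  refine Finset.sum_congr rfl fun v _ => ?_
  refine Finset.sum_congr rfl fun w _ => ?_
  refine Finset.sum_congr rfl fun k _ => ?_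
  ring

lemma sum_inv_entries {p q : ℕ} (t : ℝ)
    (hinv : IsUnit (t • (1 : Matrix (Fin p ⊕ Fin q) (Fin p ⊕ Fin q) ℝ) - negKpq p q).det)
    (hd : t ^ 2 - (p:ℝ) * q ≠ 0) :
    ∑ v, ∑ w, (t • (1 : Matrix (Fin p ⊕ Fin q) (Fin p ⊕ Fin q) ℝ) - negKpq p q)⁻¹ w v
      = (((p:ℝ) + q) * t - 2 * p * q) / (t ^ 2 - (p:ℝ) * q) := by
  set M := t • (1 : Matrix (Fin p ⊕ Fin q) (Fin p ⊕ Fin q) ℝ) - negKpq p q with hM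
  set d : ℝ := t ^ 2 - (p:ℝ) * q
  set a : ℝ := (t - q) / d
  set b : ℝ := (t - p) / d
  set wv : Fin p ⊕ Fin q → ℝ := Sum.elim (fun _ => a) (fun _ => b) with hwv
  have hMw : M.mulVec wv = fun _ => 1 := by
    ext v
    cases v <;>
      simp [hM, Matrix.mulVec, dotProduct, Fintype.sum_sum_type, negKpq,
        Matrix.one_apply, hwv, Finset.sum_ite_eq, Finset.mul_sum, mul_ite, ite_mul,
        Finset.sum_sub_distrib] <;>
      · simp only [a, b]
        field_simp
        simp only [d]
        ring
  have hsolve : M⁻¹.mulVec (fun _ => 1) = wv := by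
    rw [← hMw, Matrix.mulVec_mulVec, Matrix.nonsing_inv_mul M hinv, Matrix.one_mulVec]
  rw [Finset.sum_comm]
  have : ∀ w, ∑ v, M⁻¹ w v = wv w := by
    intro w
    have := congrFun hsolve w
    simpa [Matrix.mulVec, dotProduct] using this
  rw [Finset.sum_congr rfl fun w _ => this w]
  simp [hwv, Fintype.sum_sum_type, a, b, d]
  field_simp
  ring

lemma det_poly_herm {n : ℕ} (A₀ : Matrix (Fin n) (Fin n) ℝ) (hA : A₀.IsHermitian) (t s : ℝ) :
    (t • (1 : Matrix (Fin n) (Fin n) ℝ) - A₀ - s • (A₀ * A₀)).det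
      = ∏ i, (t - hA.eigenvalues i - s * hA.eigenvalues i ^ 2) := by
  set U : Matrix (Fin n) (Fin n) ℝ := (hA.eigenvectorUnitary : Matrix (Fin n) (Fin n) ℝ) with hU
  set D : Matrix (Fin n) (Fin n) ℝ := Matrix.diagonal (RCLike.ofReal ∘ hA.eigenvalues) with hD
  have hU1 : U * star U = 1 := (Matrix.mem_unitaryGroup_iff).mp (hA.eigenvectorUnitary).2
  have hU2 : star U * U = 1 := (Matrix.mem_unitaryGroup_iff').mp (hA.eigenvectorUnitary).2
  have hspec : A₀ = U * D * star U := hA.spectral_theorem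
  have hcancel : ∀ X : Matrix (Fin n) (Fin n) ℝ, star U * (U * X) = X := fun X => by
    rw [← Matrix.mul_assoc, hU2, Matrix.one_mul]
  have hspec' : A₀ = U * (D * star U) := by rw [hspec, Matrix.mul_assoc]
  have h2' : A₀ * A₀ = U * (D * (D * star U)) := by
    rw [hspec]
    simp only [Matrix.mul_assoc]
    rw [hcancel]
  have key : t • (1 : Matrix (Fin n) (Fin n) ℝ) - A₀ - s • (A₀ * A₀)
      = U * (t • (1 : Matrix (Fin n) (Fin n) ℝ) - D - s • (D * D)) * star U := by
    conv_lhs => rw [h2', hspec']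
    simp only [Matrix.mul_sub, Matrix.sub_mul, Matrix.mul_smul, Matrix.smul_mul,
      Matrix.mul_one, Matrix.one_mul, Matrix.mul_assoc, hU1]
  have hdetU : U.det * (star U).det = 1 := by rw [← Matrix.det_mul, hU1, Matrix.det_one]
  rw [key, Matrix.det_mul, Matrix.det_mul]
  have hdiag : t • (1 : Matrix (Fin n) (Fin n) ℝ) - D - s • (D * D)
      = Matrix.diagonal (fun i => t - hA.eigenvalues i - s * hA.eigenvalues i ^ 2) := by
    rw [hD, Matrix.diagonal_mul_diagonal]
    ext i j
    rcases eq_or_ne i j with h | h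
    · subst h
      simp [Matrix.diagonal_apply_eq, Matrix.one_apply_eq, sq]
      try ring
    · simp [Matrix.diagonal_apply_ne _ h, Matrix.one_apply_ne h]
  rw [hdiag, Matrix.det_diagonal, mul_comm, ← mul_assoc, mul_comm (star U).det, hdetU, one_mul]

/-- Let `S` be a signed graph on `n` vertices with eigenvalues `θ₁, …, θ_n` (with multiplicity)
and let `p, q ≥ 1`.  For every real `t` with `tI − A(K_{p,q},−)` invertible, the adjacency
matrix `A` of `S ⋆ₛ (K_{p,q},−)` satisfies
`det(tI − A) = t^{n(p+q−2)} · ∏ᵢ ((t² − pq)(t − θᵢ) − ((p+q)t − 2pq)θᵢ²)`. -/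
theorem det_corona_negKpq {n p q : ℕ}
    (A₀ : Matrix (Fin n) (Fin n) ℝ) (h₀ : IsSignedAdj A₀)
    (hp : 1 ≤ p) (hq : 1 ≤ q) (t : ℝ)
    (hinv : IsUnit (t • (1 : Matrix (Fin p ⊕ Fin q) (Fin p ⊕ Fin q) ℝ) - negKpq p q).det) :
    (t • (1 : Matrix (Fin n ⊕ (Fin p ⊕ Fin q) × Fin n)
          (Fin n ⊕ (Fin p ⊕ Fin q) × Fin n) ℝ) - coronaAdj A₀ (negKpq p q)).det
      = t ^ (n * (p + q - 2)) *
        ∏ i, ((t ^ 2 - (p : ℝ) * q) * (t - h₀.1.eigenvalues i)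
            - (((p : ℝ) + q) * t - 2 * p * q) * (h₀.1.eigenvalues i) ^ 2) := by
  classical
  set V := Fin p ⊕ Fin q
  set B := negKpq p q with hB
  set M := t • (1 : Matrix V V ℝ) - B with hM
  set C : Matrix (Fin n) (V × Fin n) ℝ := Matrix.of fun i pr => A₀ i pr.2 with hC
  set C' : Matrix (V × Fin n) (Fin n) ℝ := Matrix.of fun pr j => A₀ pr.2 j with hC'
  have hblock : t • (1 : Matrix (Fin n ⊕ V × Fin n) (Fin n ⊕ V × Fin n) ℝ)
        - coronaAdj A₀ B
      = Matrix.fromBlocks (t • 1 - A₀) (-C) (-C') (M ⊗ₖ (1 : Matrix (Fin n) (Fin n) ℝ)) := by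
    ext i j
    cases i <;> cases j <;>
      simp [coronaAdj, Matrix.one_apply, Prod.ext_iff, negKpq, hM, hB, C, C',
        Matrix.kroneckerMap_apply, sub_mul, ite_and, mul_ite] <;>
      split_ifs <;> simp_all
  have hdetK : (M ⊗ₖ (1 : Matrix (Fin n) (Fin n) ℝ)).det = M.det ^ n := by
    rw [Matrix.det_kronecker]; simp
  have hKunit : IsUnit (M ⊗ₖ (1 : Matrix (Fin n) (Fin n) ℝ)).det := by
    rw [hdetK]; exact hinv.pow n
  haveI : Invertible (M ⊗ₖ (1 : Matrix (Fin n) (Fin n) ℝ)) :=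
    Matrix.invertibleOfIsUnitDet _ hKunit
  rw [hblock, Matrix.det_fromBlocks₂₂]
  have hinvOf : ⅟(M ⊗ₖ (1 : Matrix (Fin n) (Fin n) ℝ)) = M⁻¹ ⊗ₖ (1 : Matrix (Fin n) (Fin n) ℝ) := by
    rw [Matrix.invOf_eq_nonsing_inv, Matrix.inv_kronecker, inv_one]
  rw [hinvOf]
  have hneg : (-C) * (M⁻¹ ⊗ₖ (1 : Matrix (Fin n) (Fin n) ℝ)) * (-C')
      = C * (M⁻¹ ⊗ₖ (1 : Matrix (Fin n) (Fin n) ℝ)) * C' := by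
    rw [Matrix.neg_mul, Matrix.mul_neg, Matrix.neg_mul, neg_neg]
  rw [hneg]
  set s : ℝ := ∑ v, ∑ w, M⁻¹ w v with hs
  have hCC : C * (M⁻¹ ⊗ₖ (1 : Matrix (Fin n) (Fin n) ℝ)) * C' = s • (A₀ * A₀) :=
    key_CC A₀ M⁻¹
  -- t² - pq ≠ 0
  have hdetM : M.det = t ^ (p + q - 2) * (t ^ 2 - p * q) :=
    det_smul_one_sub_negKpq' hp hq t
  have hd : t ^ 2 - (p:ℝ) * q ≠ 0 := by
    intro h
    rw [hdetM, h, mul_zero] at hinv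
    exact hinv.ne_zero rfl
  have hsval : s = (((p:ℝ) + q) * t - 2 * p * q) / (t ^ 2 - (p:ℝ) * q) :=
    sum_inv_entries t hinv hd
  rw [hCC, hdetK, det_poly_herm A₀ h₀.1 t s, hdetM,
    mul_pow, ← pow_mul, Nat.mul_comm (p + q - 2) n, mul_assoc]
  congr 1
  rw [show (t ^ 2 - (p:ℝ) * q) ^ n = ∏ _i : Fin n, (t ^ 2 - (p:ℝ) * q) by simp,
    ← Finset.prod_mul_distrib]
  refine Finset.prod_congr rfl fun i _ => ?_
  rw [hsval]
  field_simp
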